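/- For the Vilenkin system on a bounded Vilenkin group with R = sup_k m_k, the Fejér kernels satisfy ∫_{G_m} K_n dμ = 1 and sup_n ∫_{G_m} |K_n| dμ ≤ R⁵. -/

import Mathlib

noncomputable section
open MeasureTheory Finset Filter

namespace VilPaper

instance (n : ℕ) : TopologicalSpace (ZMod n) := ⊥
instance (n : ℕ) : DiscreteTopology (ZMod n) := ⟨rfl⟩

variable (m : ℕ → ℕ)

abbrev mseq (k : ℕ) : ℕ := m k + 2
abbrev G := ∀ k, ZMod (mseq m k)

instance : IsTopologicalAddGroup (G m) := by infer_instance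
instance : CompactSpace (G m) := by infer_instance
instance : MeasurableSpace (G m) := borel _
instance : BorelSpace (G m) := ⟨rfl⟩

def μV : Measure (G m) := Measure.addHaarMeasure ⊤

/-- The generalized number system: `M_0 = 1`, `M_{k+1} = m_k M_k`. -/
def Mgen : ℕ → ℕ
  | 0 => 1
  | k + 1 => mseq m k * Mgen k

/-- The cylinder sets `I_n(x)`. -/
def cyl (n : ℕ) (x : G m) : Set (G m) := {y | ∀ i < n, y i = x i}

/-- `I_n := I_n(0)`. -/
def Icyl (n : ℕ) : Set (G m) := cyl m n 0

/-- Generalized Rademacher functions `r_k(x) = exp(2πi x_k / m_k)`. -/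
def rad (k : ℕ) (x : G m) : ℂ :=
  Complex.exp (2 * Real.pi * Complex.I * ((x k).val : ℂ) / (mseq m k : ℂ))

/-- The `j`-th digit `n_j` of `n` in the number system `(M_k)`. -/
def digit (n j : ℕ) : ℕ := n / Mgen m j % mseq m j

/-- `|n| = max { j : n_j ≠ 0 }`. -/
def ndeg (n : ℕ) : ℕ := sSup {j | digit m n j ≠ 0}

/-- The Vilenkin system `ψ_n = ∏ r_k^{n_k}`. -/
def psi (n : ℕ) (x : G m) : ℂ := ∏ k ∈ Finset.range (n + 1), rad m k x ^ digit m n k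

/-- Dirichlet kernels `D_n = ∑_{k<n} ψ_k`. -/
def Dker (n : ℕ) (x : G m) : ℂ := ∑ k ∈ Finset.range n, psi m k x

/-- Fejér kernels `K_n = (1/n) ∑_{k=1}^n D_k`. -/
def Kker (n : ℕ) (x : G m) : ℂ := (n : ℂ)⁻¹ * ∑ k ∈ Finset.range n, Dker m (k + 1) x

/-- Vilenkin–Fourier coefficients. -/
def fcoef (f : G m → ℂ) (k : ℕ) : ℂ := ∫ x, f x * (starRingEnd ℂ) (psi m k x) ∂ μV m

/-- Partial sums `S_n f` of the Vilenkin–Fourier series. -/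
def partialSum (f : G m → ℂ) (n : ℕ) (x : G m) : ℂ :=
  ∑ k ∈ Finset.range n, fcoef m f k * psi m k x

/-- Fejér means `σ_n f = (1/n) ∑_{k=1}^n S_k f`. -/
def fejer (f : G m → ℂ) (n : ℕ) (x : G m) : ℂ :=
  (n : ℂ)⁻¹ * ∑ k ∈ Finset.range n, partialSum m f (k + 1) x

/-- `Q_n = ∑_{k<n} q_k`. -/
def Qsum (q : ℕ → ℝ) (n : ℕ) : ℝ := ∑ k ∈ Finset.range n, q k

/-- The `T` means `T_n f = (1/Q_n) ∑_{k<n} q_k S_k f`. -/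
def Tmean (q : ℕ → ℝ) (f : G m → ℂ) (n : ℕ) (x : G m) : ℂ :=
  (Qsum q n : ℂ)⁻¹ * ∑ k ∈ Finset.range n, (q k : ℂ) * partialSum m f k x

/-- Convolution on `G_m`. -/
def conv (f g : G m → ℂ) (x : G m) : ℂ := ∫ t, f t * g (x - t) ∂ μV m

/-- The modulus of continuity `ω_p(δ, f) = sup_{t ∈ I_s, 1/M_s < δ} ‖f(·-t) - f‖_p`. -/
def omega (p : ENNReal) (f : G m → ℂ) (δ : ℝ) : ENNReal :=
  ⨆ (s : ℕ) (_ : (1 : ℝ) / (Mgen m s : ℝ) < δ) (t : G m) (_ : t ∈ Icyl m s),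
    eLpNorm (fun x => f (x - t) - f x) p (μV m)

/-- The Lipschitz class `Lip(α, p)`. -/
def LipClass (p : ENNReal) (α : ℝ) (f : G m → ℂ) : Prop :=
  MemLp f p (μV m) ∧ ∃ C : ℝ, ∀ δ : ℝ, 0 < δ → omega m p f δ ≤ ENNReal.ofReal (C * δ ^ α)

section Arith

lemma mseq_two : 2 ≤ mseq m k := Nat.le_add_left 2 (m k)

instance : NeZero (mseq m k) := ⟨by have := mseq_two (m := m) (k := k); omega⟩

lemma Mgen_pos (s : ℕ) : 0 < Mgen m s := by
  induction s with
  | zero => simp [Mgen]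
  | succ s ih =>
    show 0 < mseq m s * Mgen m s
    exact Nat.mul_pos (by have := mseq_two (m := m) (k := s); omega) ih

lemma Mgen_succ (s : ℕ) : Mgen m (s + 1) = mseq m s * Mgen m s := rfl

lemma lt_Mgen (s : ℕ) : s < Mgen m s := by
  induction s with
  | zero => simp [Mgen]
  | succ s ih =>
    have h2 : 2 * Mgen m s ≤ Mgen m (s+1) := by
      rw [Mgen_succ]; exact Nat.mul_le_mul_right _ (mseq_two m)
    omega

lemma Mgen_mono {i j : ℕ} (h : i ≤ j) : Mgen m i ≤ Mgen m j := by
  induction j with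
  | zero => simpa using (Nat.le_zero.mp h) ▸ le_rfl
  | succ j ih =>
    rcases Nat.lt_or_ge i (j+1) with h' | h'
    · have := ih (by omega)
      have h2 : Mgen m j ≤ Mgen m (j+1) := by
        rw [Mgen_succ]; exact Nat.le_mul_of_pos_left _ (by have := mseq_two (m := m) (k := j); omega)
      omega
    · have : i = j + 1 := by omega
      simp [this]

lemma Mgen_dvd {i j : ℕ} (h : i ≤ j) : Mgen m i ∣ Mgen m j := by
  induction j with
  | zero => exact (Nat.le_zero.mp h) ▸ dvd_rfl
  | succ j ih =>
    rcases Nat.lt_or_ge i (j+1) with h' | h'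
    · exact (ih (by omega)).trans ⟨mseq m j, by rw [Mgen_succ]; ring⟩
    · have : i = j + 1 := by omega
      simp [this]

lemma digit_lt (n j : ℕ) : digit m n j < mseq m j := Nat.mod_lt _ (by have := mseq_two (m := m) (k := j); omega)

lemma digit_zero (j : ℕ) : digit m 0 j = 0 := by simp [digit]

lemma digit_high {n T j : ℕ} (hn : n < Mgen m T) (hj : T ≤ j) : digit m n j = 0 := by
  have : n < Mgen m j := lt_of_lt_of_le hn (Mgen_mono m hj)
  simp [digit, Nat.div_eq_of_lt this]

lemma digit_self_high {n j : ℕ} (hj : n < j) : digit m n j = 0 :=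
  digit_high m (lt_trans hj (lt_Mgen m j)) le_rfl

lemma digit_add_low {p s j i : ℕ} (hj : j < Mgen m s) (hi : i < s) :
    digit m (p * Mgen m s + j) i = digit m j i := by
  have hdvd : Mgen m (i+1) ∣ Mgen m s := Mgen_dvd m (by omega)
  obtain ⟨t, ht⟩ := hdvd
  have hMi : 0 < Mgen m i := Mgen_pos m i
  have hkey : Mgen m s = Mgen m i * (mseq m i * t) := by
    rw [ht, Mgen_succ]; ring
  rw [digit, digit, hkey]
  rw [show p * (Mgen m i * (mseq m i * t)) + j = j + (p * (mseq m i * t)) * Mgen m i by ring]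
  rw [Nat.add_mul_div_right _ _ hMi]
  rw [show j / Mgen m i + p * (mseq m i * t) = j / Mgen m i + (p * t) * mseq m i by ring]
  rw [Nat.add_mul_mod_self_right]

lemma digit_add_self {p s j : ℕ} (hj : j < Mgen m s) (hp : p < mseq m s) :
    digit m (p * Mgen m s + j) s = p := by
  have hMs : 0 < Mgen m s := Mgen_pos m s
  rw [digit, show p * Mgen m s + j = j + p * Mgen m s by ring,
    Nat.add_mul_div_right _ _ hMs, Nat.div_eq_of_lt hj]
  simpa using Nat.mod_eq_of_lt hp

lemma digit_add_high {p s j i : ℕ} (hj : j < Mgen m s) (hp : p < mseq m s) (hi : s < i) :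
    digit m (p * Mgen m s + j) i = 0 := by
  apply digit_high m (T := s + 1) _ (by omega)
  rw [Mgen_succ]
  calc p * Mgen m s + j < p * Mgen m s + Mgen m s := by omega
  _ = (p+1) * Mgen m s := by ring
  _ ≤ mseq m s * Mgen m s := Nat.mul_le_mul_right _ hp

lemma Mgen_eq_prod (s : ℕ) : Mgen m s = ∏ i ∈ Finset.range s, mseq m i := by
  induction s with
  | zero => simp [Mgen]
  | succ s ih => rw [Mgen_succ, Finset.prod_range_succ, ih]; ring

end Arith
section Exp

open Complex

/-- `ζ m v = exp(2πi v / m)` for natural `v`. -/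
def zet (M v : ℕ) : ℂ := Complex.exp (2 * Real.pi * Complex.I * (v : ℂ) / (M : ℕ))

lemma zet_add (M a b : ℕ) (hM : M ≠ 0) : zet M (a + b) = zet M a * zet M b := by
  rw [zet, zet, zet, ← Complex.exp_add]
  congr 1
  have : (M:ℂ) ≠ 0 := Nat.cast_ne_zero.mpr hM
  push_cast
  field_simp

lemma zet_mul_self (M v : ℕ) (hM : M ≠ 0) : zet M (M * v) = 1 := by
  have hMc : (M:ℂ) ≠ 0 := Nat.cast_ne_zero.mpr hM
  rw [zet]
  have : 2 * (Real.pi:ℂ) * Complex.I * ((M * v : ℕ) : ℂ) / (M : ℂ) = (v : ℤ) * (2 * Real.pi * Complex.I) := by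
    push_cast; field_simp
  rw [this, Complex.exp_int_mul_two_pi_mul_I]

lemma zet_mod (M v : ℕ) (hM : M ≠ 0) : zet M (v % M) = zet M v := by
  conv_rhs => rw [show v = M * (v / M) + v % M from (Nat.div_add_mod v M).symm]
  rw [zet_add M _ _ hM, zet_mul_self M _ hM, one_mul]

lemma zet_pow (M v p : ℕ) : zet M v ^ p = zet M (v * p) := by
  rw [zet, zet, ← Complex.exp_nat_mul]
  congr 1
  push_cast; ring

lemma zet_zero (M : ℕ) : zet M 0 = 1 := by simp [zet]

lemma zet_natpow (M v : ℕ) (hM : M ≠ 0) : zet M v ^ M = 1 := by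
  rw [zet_pow, mul_comm, zet_mul_self M _ hM]

lemma abs_zet (M v : ℕ) : ‖zet M v‖ = 1 := by
  have hre : (2 * (Real.pi:ℂ) * Complex.I * (v:ℂ) / (M:ℂ)).re = 0 := by
    have : (2 * (Real.pi:ℂ) * Complex.I * (v:ℂ) / (M:ℂ)) = Complex.I * ((2 * Real.pi * v / M : ℝ) : ℂ) := by
      push_cast; ring
    rw [this]
    simp [Complex.mul_re]
  rw [zet, Complex.norm_exp, hre, Real.exp_zero]

lemma zet_ne_one {M v : ℕ} (hv : 0 < v) (hvM : v < M) : zet M v ≠ 1 := by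
  intro h
  rw [zet, Complex.exp_eq_one_iff] at h
  obtain ⟨n, hn⟩ := h
  have hMc : (M:ℂ) ≠ 0 := Nat.cast_ne_zero.mpr (by omega)
  have h2 : (v : ℂ) = (n : ℂ) * (M : ℂ) := by
    have hpi : (2 * (Real.pi:ℂ) * Complex.I) ≠ 0 := Complex.two_pi_I_ne_zero
    field_simp at hn
    apply mul_left_cancel₀ hpi
    linear_combination (2 * (Real.pi:ℂ) * Complex.I) * hn
  have h3 : (v : ℤ) = n * M := by exact_mod_cast h2
  rcases le_or_gt n 0 with hn0 | hn0
  · have : (n * M : ℤ) ≤ 0 := mul_nonpos_of_nonpos_of_nonneg hn0 (by positivity)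
    omega
  · have h1 : (1:ℤ) ≤ n := hn0
    have : (M:ℤ) ≤ n * M := le_mul_of_one_le_left (by positivity) h1
    omega

lemma geom_zet (M v : ℕ) (hv : 0 < v) (hvM : v < M) :
    ∑ p ∈ Finset.range M, zet M v ^ p = 0 := by
  rw [geom_sum_eq (zet_ne_one hv hvM), zet_natpow M v (by omega), sub_self, zero_div]

end Exp
section Psi

lemma rad_eq_zet (k : ℕ) (x : G m) : rad m k x = zet (mseq m k) ((x k).val) := rfl

lemma abs_rad (k : ℕ) (x : G m) : ‖rad m k x‖ = 1 := by
  rw [rad_eq_zet]; exact abs_zet _ _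

lemma rad_add (k : ℕ) (x y : G m) : rad m k (x + y) = rad m k x * rad m k y := by
  have hM : mseq m k ≠ 0 := by have := mseq_two (m := m) (k := k); omega
  rw [rad_eq_zet, rad_eq_zet, rad_eq_zet]
  have : (x + y) k = x k + y k := rfl
  rw [this, ZMod.val_add, zet_mod _ _ hM, zet_add _ _ _ hM]

lemma psi_eq_prod {k T : ℕ} (hk : k < Mgen m T) (x : G m) :
    psi m k x = ∏ i ∈ Finset.range T, rad m i x ^ digit m k i := by
  have h1 : psi m k x = ∏ i ∈ Finset.range (max (k+1) T), rad m i x ^ digit m k i := by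
    rw [psi]
    apply Finset.prod_subset (Finset.range_subset_range.mpr (le_max_left _ _))
    intro i _ hi
    rw [Finset.mem_range, not_lt] at hi
    rw [digit_self_high m (by omega), pow_zero]
  have h2 : (∏ i ∈ Finset.range T, rad m i x ^ digit m k i)
      = ∏ i ∈ Finset.range (max (k+1) T), rad m i x ^ digit m k i := by
    apply Finset.prod_subset (Finset.range_subset_range.mpr (le_max_right _ _))
    intro i _ hi
    rw [Finset.mem_range, not_lt] at hi
    rw [digit_high m hk hi, pow_zero]
  rw [h1, ← h2]

lemma psi_zero (x : G m) : psi m 0 x = 1 := by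
  simp [psi, digit_zero]

lemma abs_psi (k : ℕ) (x : G m) : ‖psi m k x‖ = 1 := by
  rw [psi, norm_prod]
  apply Finset.prod_eq_one
  intro i _
  rw [norm_pow, abs_rad, one_pow]

lemma psi_add (k : ℕ) (x y : G m) : psi m k (x + y) = psi m k x * psi m k y := by
  rw [psi, psi, psi, ← Finset.prod_mul_distrib]
  apply Finset.prod_congr rfl
  intro i _
  rw [rad_add, mul_pow]

lemma psi_shift {p s j : ℕ} (hp : p < mseq m s) (hj : j < Mgen m s) (x : G m) :
    psi m (p * Mgen m s + j) x = rad m s x ^ p * psi m j x := by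
  have hlt : p * Mgen m s + j < Mgen m (s+1) := by
    rw [Mgen_succ]
    calc p * Mgen m s + j < p * Mgen m s + Mgen m s := by omega
    _ = (p+1) * Mgen m s := by ring
    _ ≤ mseq m s * Mgen m s := Nat.mul_le_mul_right _ hp
  rw [psi_eq_prod m hlt, psi_eq_prod m hj, Finset.prod_range_succ,
    digit_add_self m hj hp]
  rw [show (∏ i ∈ Finset.range s, rad m i x ^ digit m (p * Mgen m s + j) i)
      = ∏ i ∈ Finset.range s, rad m i x ^ digit m j i from
    Finset.prod_congr rfl fun i hi => by
      rw [digit_add_low m hj (Finset.mem_range.mp hi)]]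
  ring

/-- `f` depends only on the first `N` coordinates. -/
def Dep {α : Type*} (f : G m → α) (N : ℕ) : Prop :=
  ∀ x y : G m, (∀ i, i < N → x i = y i) → f x = f y

lemma Dep.mono {α : Type*} {f : G m → α} {N N' : ℕ} (h : Dep m f N) (hN : N ≤ N') :
    Dep m f N' := fun x y hxy => h x y fun i hi => hxy i (by omega)

lemma Dep.comp {α β : Type*} {f : G m → α} {N : ℕ} (h : Dep m f N) (g : α → β) :
    Dep m (fun x => g (f x)) N := fun x y hxy => congrArg g (h x y hxy)

lemma dep_rad {s N : ℕ} (hs : s < N) : Dep m (rad m s) N := by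
  intro x y hxy
  rw [rad_eq_zet, rad_eq_zet, hxy s hs]

lemma dep_psi {k N : ℕ} (hk : k < Mgen m N) : Dep m (psi m k) N := by
  intro x y hxy
  rw [psi_eq_prod m hk, psi_eq_prod m hk]
  apply Finset.prod_congr rfl
  intro i hi
  rw [dep_rad m (Finset.mem_range.mp hi) x y hxy]

lemma dep_Dker {k N : ℕ} (hk : k ≤ Mgen m N) : Dep m (Dker m k) N := by
  intro x y hxy
  rw [Dker, Dker]
  apply Finset.sum_congr rfl
  intro j hj
  exact dep_psi m (lt_of_lt_of_le (Finset.mem_range.mp hj) hk) x y hxy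

end Psi

section DkerLemmas

lemma sum_range_mul_block {β : Type*} [AddCommMonoid β] (f : ℕ → β) (q M : ℕ) :
    ∑ k ∈ Finset.range (q * M), f k
      = ∑ p ∈ Finset.range q, ∑ j ∈ Finset.range M, f (p * M + j) := by
  induction q with
  | zero => simp
  | succ q ih =>
    rw [show (q + 1) * M = q * M + M by ring, Finset.sum_range_add, ih,
      Finset.sum_range_succ]

lemma Dker_shift {p s j : ℕ} (hp : p < mseq m s) (hj : j ≤ Mgen m s) (x : G m) :
    Dker m (p * Mgen m s + j) x = Dker m (p * Mgen m s) x + rad m s x ^ p * Dker m j x := by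
  rw [Dker, Finset.sum_range_add]
  have h2 : ∑ i ∈ Finset.range j, psi m (p * Mgen m s + i) x
      = rad m s x ^ p * Dker m j x := by
    rw [Dker, Finset.mul_sum]
    exact Finset.sum_congr rfl fun i hi =>
      psi_shift m hp (lt_of_lt_of_le (Finset.mem_range.mp hi) hj) x
  rw [h2]
  rfl

lemma Dker_zero (x : G m) : Dker m 0 x = 0 := by simp [Dker]

lemma Dker_mul {p s : ℕ} (hp : p ≤ mseq m s) (x : G m) :
    Dker m (p * Mgen m s) x
      = (∑ l ∈ Finset.range p, rad m s x ^ l) * Dker m (Mgen m s) x := by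
  induction p with
  | zero => simp [Dker_zero]
  | succ p ih =>
    rw [show (p + 1) * Mgen m s = p * Mgen m s + Mgen m s by ring,
      Dker_shift m (by omega) le_rfl, ih (by omega), Finset.sum_range_succ]
    ring

lemma sum_prod_digit (s : ℕ) (g : ℕ → ℕ → ℂ) :
    ∑ k ∈ Finset.range (Mgen m s), ∏ i ∈ Finset.range s, g i (digit m k i)
      = ∏ i ∈ Finset.range s, ∑ d ∈ Finset.range (mseq m i), g i d := by
  induction s with
  | zero => simp [Mgen]
  | succ s ih =>
    rw [Mgen_succ, sum_range_mul_block, Finset.prod_range_succ, ← ih]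
    calc ∑ p ∈ Finset.range (mseq m s), ∑ j ∈ Finset.range (Mgen m s),
          ∏ i ∈ Finset.range (s+1), g i (digit m (p * Mgen m s + j) i)
        = ∑ p ∈ Finset.range (mseq m s),
            g s p * ∑ j ∈ Finset.range (Mgen m s), ∏ i ∈ Finset.range s, g i (digit m j i) := by
          apply Finset.sum_congr rfl; intro p hp
          rw [Finset.mul_sum]
          apply Finset.sum_congr rfl; intro j hj
          rw [Finset.mem_range] at hp hj
          rw [Finset.prod_range_succ, digit_add_self m hj hp, mul_comm]
          congr 1
          exact Finset.prod_congr rfl fun i hi => by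
            rw [digit_add_low m hj (Finset.mem_range.mp hi)]
      _ = (∑ k ∈ Finset.range (Mgen m s), ∏ i ∈ Finset.range s, g i (digit m k i))
            * ∑ d ∈ Finset.range (mseq m s), g s d := by
          rw [← Finset.sum_mul]; ring

lemma Dker_Mgen (s : ℕ) (x : G m) :
    Dker m (Mgen m s) x = if ∀ i, i < s → x i = 0 then (Mgen m s : ℂ) else 0 := by
  have key : Dker m (Mgen m s) x
      = ∏ i ∈ Finset.range s, ∑ d ∈ Finset.range (mseq m i), rad m i x ^ d := by
    rw [Dker, ← sum_prod_digit]
    apply Finset.sum_congr rfl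
    intro k hk
    exact psi_eq_prod m (Finset.mem_range.mp hk) x
  rw [key]
  split_ifs with h
  · rw [Mgen_eq_prod]
    push_cast
    apply Finset.prod_congr rfl
    intro i hi
    have : rad m i x = 1 := by
      rw [rad_eq_zet, h i (Finset.mem_range.mp hi), ZMod.val_zero, zet_zero]
    simp [this]
  · push_neg at h
    obtain ⟨i, hi, hxi⟩ := h
    apply Finset.prod_eq_zero (Finset.mem_range.mpr hi)
    have hv : 0 < (x i).val := by
      rcases Nat.eq_zero_or_pos (x i).val with h0 | h0
      · exact absurd ((ZMod.val_eq_zero _).mp h0) hxi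
      · exact h0
    have hvM : (x i).val < mseq m i := ZMod.val_lt _
    rw [rad_eq_zet]
    rw [show (∑ d ∈ Finset.range (mseq m i), zet (mseq m i) ((x i).val) ^ d) =
      ∑ p ∈ Finset.range (mseq m i), zet (mseq m i) ((x i).val) ^ p from rfl]
    exact geom_zet _ _ hv hvM

end DkerLemmas
open scoped ENNReal
section MeasureBasics

instance : (μV m).IsAddLeftInvariant := by
  unfold μV; infer_instance

instance : IsProbabilityMeasure (μV m) := by
  constructor
  rw [show (Set.univ : Set (G m)) = ↑(⊤ : TopologicalSpace.PositiveCompacts (G m)) from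
    (TopologicalSpace.PositiveCompacts.coe_top).symm]
  unfold μV
  exact Measure.addHaarMeasure_self

instance : (μV m).IsAddRightInvariant := by
  constructor
  intro g
  have h : (fun x : G m => x + g) = (fun x : G m => g + x) := by
    funext x; exact add_comm x g
  rw [h]
  exact map_add_left_eq_self (μV m) g

lemma continuous_rad (k : ℕ) : Continuous (rad m k) := by
  have : rad m k = (fun v : ZMod (mseq m k) => zet (mseq m k) v.val) ∘ (fun x : G m => x k) := rfl
  rw [this]
  exact Continuous.comp (continuous_of_discreteTopology) (continuous_apply k)

lemma continuous_psi (k : ℕ) : Continuous (psi m k) := by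
  unfold psi
  exact continuous_finset_prod _ fun i _ => (continuous_rad m i).pow _

lemma continuous_Dker (k : ℕ) : Continuous (Dker m k) := by
  unfold Dker
  exact continuous_finset_sum _ fun i _ => continuous_psi m i

lemma integrable_of_continuous {E : Type*} [NormedAddCommGroup E]
    {f : G m → E} (hf : Continuous f) : Integrable f (μV m) := by
  have h1 : HasCompactSupport f := by
    rw [HasCompactSupport]
    exact IsClosed.isCompact (isClosed_tsupport f)
  exact hf.integrable_of_hasCompactSupport h1

/-- Embedding of a finite prefix into the group. -/
def extF (N : ℕ) (a : ∀ i : Fin N, ZMod (mseq m (i : ℕ))) : G m :=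
  fun i => if h : i < N then a ⟨i, h⟩ else 0

lemma extF_apply (N : ℕ) (a : ∀ i : Fin N, ZMod (mseq m (i : ℕ))) (i : Fin N) :
    extF m N a (i : ℕ) = a i := by
  simp [extF, i.isLt]

lemma card_prefix (N : ℕ) :
    Fintype.card (∀ i : Fin N, ZMod (mseq m (i : ℕ))) = Mgen m N := by
  rw [Fintype.card_pi, Mgen_eq_prod,
    ← Fin.prod_univ_eq_prod_range (fun i => mseq m i) N]
  exact Finset.prod_congr rfl fun i _ => ZMod.card _

theorem integral_eq_avg {E : Type*} [NormedAddCommGroup E] [NormedSpace ℝ E]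
    [CompleteSpace E] (N : ℕ) (f : G m → E)
    (hdep : Dep m f N) :
    ∫ x, f x ∂ μV m
      = (Mgen m N : ℝ)⁻¹ • ∑ a : (∀ i : Fin N, ZMod (mseq m (i : ℕ))), f (extF m N a) := by
  classical
  set C : (∀ i : Fin N, ZMod (mseq m (i : ℕ))) → Set (G m) :=
    fun a => {x | ∀ i : Fin N, x (i : ℕ) = a i} with hC
  have hmeasC : ∀ a, MeasurableSet (C a) := by
    intro a
    have : C a = ⋂ i : Fin N, (fun x : G m => x (i : ℕ)) ⁻¹' {a i} := by
      ext x; simp [hC, Set.mem_iInter]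
    rw [this]
    exact MeasurableSet.iInter fun i =>
      ((continuous_apply ((i : ℕ))).measurable (measurableSet_singleton _))
  have hCmem : ∀ (x : G m) a, x ∈ C a ↔ a = fun i : Fin N => x (i : ℕ) := by
    intro x a
    constructor
    · intro hx; funext i; exact (hx i).symm
    · rintro rfl; intro i; rfl
  have hCeq : ∀ a, μV m (C a) = μV m (C 0) := by
    intro a
    have heq : C a = (fun x : G m => (-(extF m N a)) + x) ⁻¹' (C 0) := by
      ext x
      simp only [hC, Set.mem_preimage, Set.mem_setOf_eq, Pi.add_apply, Pi.neg_apply,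
        Pi.zero_apply, extF_apply, neg_add_eq_zero]
      exact ⟨fun h i => (h i).symm, fun h i => (h i).symm⟩
    rw [heq, measure_preimage_add]
  have hdisj : Pairwise (Function.onFun Disjoint C) := by
    intro a b hab
    rw [Function.onFun, Set.disjoint_left]
    intro x hxa hxb
    exact hab (((hCmem x a).mp hxa).trans ((hCmem x b).mp hxb).symm)
  have hcover : (⋃ a, C a) = Set.univ := by
    ext x
    simp only [Set.mem_iUnion, Set.mem_univ, iff_true]
    exact ⟨fun i : Fin N => x (i : ℕ), (hCmem x _).mpr rfl⟩
  have hsum : ∑ a : (∀ i : Fin N, ZMod (mseq m (i : ℕ))), μV m (C a) = 1 := by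
    rw [← tsum_fintype (L := SummationFilter.unconditional _), ← measure_iUnion hdisj hmeasC, hcover, measure_univ]
  have hMne : (Mgen m N : ℝ≥0∞) ≠ 0 := Nat.cast_ne_zero.mpr (Mgen_pos m N).ne'
  have hcell : ∀ a, μV m (C a) = (Mgen m N : ℝ≥0∞)⁻¹ := by
    intro a
    have h1 : ∑ a : (∀ i : Fin N, ZMod (mseq m (i : ℕ))), μV m (C a)
        = (Mgen m N : ℝ≥0∞) * μV m (C 0) := by
      rw [Finset.sum_congr rfl fun b _ => hCeq b, Finset.sum_const, Finset.card_univ,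
        card_prefix, nsmul_eq_mul]
    have h2 : (Mgen m N : ℝ≥0∞) * μV m (C 0) = 1 := by rw [← h1]; exact hsum
    rw [hCeq a]
    calc μV m (C 0) = (Mgen m N : ℝ≥0∞)⁻¹ * ((Mgen m N : ℝ≥0∞) * μV m (C 0)) := by
          rw [← mul_assoc, ENNReal.inv_mul_cancel hMne (ENNReal.natCast_ne_top _), one_mul]
      _ = (Mgen m N : ℝ≥0∞)⁻¹ := by rw [h2, mul_one]
  have hcellR : ∀ a, (μV m (C a)).toReal = (Mgen m N : ℝ)⁻¹ := by
    intro a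
    rw [hcell a]
    simp
  have hf : f = fun x => ∑ a : (∀ i : Fin N, ZMod (mseq m (i : ℕ))),
      Set.indicator (C a) (fun _ => f (extF m N a)) x := by
    funext x
    rw [Finset.sum_eq_single (fun i : Fin N => x (i : ℕ))]
    · rw [Set.indicator_of_mem ((hCmem x _).mpr rfl)]
      apply hdep
      intro i hi
      simp [extF, hi]
    · intro b _ hb
      apply Set.indicator_of_notMem
      intro hxb
      exact hb ((hCmem x b).mp hxb)
    · intro h
      exact absurd (Finset.mem_univ _) h
  conv_lhs => rw [hf]
  rw [integral_finset_sum _ fun a _ =>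
    (integrable_const _).indicator (hmeasC a), Finset.smul_sum]
  apply Finset.sum_congr rfl
  intro a _
  rw [integral_indicator_const _ (hmeasC a), measureReal_def, hcellR a]

end MeasureBasics
section Orthogonality

lemma exists_level {n : ℕ} (hn : 1 ≤ n) : ∃ s, Mgen m s ≤ n ∧ n < Mgen m (s + 1) := by
  classical
  have hex : ∃ j, n < Mgen m j := ⟨n + 1, lt_of_lt_of_le (by omega) (lt_Mgen m (n+1)).le⟩
  set j := Nat.find hex with hj
  have hspec : n < Mgen m j := Nat.find_spec hex
  have hj0 : j ≠ 0 := by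
    intro h
    rw [h] at hspec
    simp [Mgen] at hspec
    omega
  refine ⟨j - 1, ?_, ?_⟩
  · have := Nat.find_min hex (show j - 1 < j by omega)
    omega
  · rw [show j - 1 + 1 = j by omega]
    exact hspec

lemma psi_integral_zero {k : ℕ} (hk : 1 ≤ k) : ∫ x, psi m k x ∂ μV m = 0 := by
  obtain ⟨s, hs1, hs2⟩ := exists_level m hk
  set t : G m := fun i => if h : i = s then (h ▸ (1 : ZMod (mseq m s))) else 0 with ht
  have hts : t s = 1 := by simp [ht]
  have htne : ∀ i, i ≠ s → t i = 0 := by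
    intro i hi; simp [ht, hi]
  -- compute psi m k t
  haveI : Fact (1 < mseq m s) := ⟨by have := mseq_two (m := m) (k := s); omega⟩
  have hdig_lt : k / Mgen m s < mseq m s := by
    rw [Nat.div_lt_iff_lt_mul (Mgen_pos m s)]
    rw [Mgen_succ] at hs2
    omega
  have hdig : digit m k s = k / Mgen m s := by
    rw [digit, Nat.mod_eq_of_lt hdig_lt]
  have hdigpos : 0 < digit m k s := by
    rw [hdig]
    exact (Nat.one_le_div_iff (Mgen_pos m s)).mpr hs1
  have hpsit : psi m k t = zet (mseq m s) (digit m k s) := by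
    rw [psi_eq_prod m hs2, Finset.prod_range_succ]
    have h1 : ∀ i ∈ Finset.range s, rad m i t ^ digit m k i = 1 := by
      intro i hi
      rw [rad_eq_zet, htne i (by rw [Finset.mem_range] at hi; omega), ZMod.val_zero,
        zet_zero, one_pow]
    rw [Finset.prod_congr rfl h1, Finset.prod_const_one, one_mul, rad_eq_zet, hts,
      ZMod.val_one, zet_pow, one_mul]
  have hne1 : psi m k t ≠ 1 := by
    rw [hpsit]
    exact zet_ne_one hdigpos (digit_lt m k s)
  have hinv : ∫ x, psi m k (x + t) ∂ μV m = ∫ x, psi m k x ∂ μV m :=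
    integral_add_right_eq_self (psi m k) t
  have hlhs : ∫ x, psi m k (x + t) ∂ μV m = (∫ x, psi m k x ∂ μV m) * psi m k t := by
    simp_rw [psi_add]
    exact integral_mul_const _ _
  have : (∫ x, psi m k x ∂ μV m) * (psi m k t - 1) = 0 := by
    rw [mul_sub, mul_one, ← hlhs, hinv, sub_self]
  rcases mul_eq_zero.mp this with h | h
  · exact h
  · exact absurd (by linear_combination h) hne1

lemma psi_integral_one : ∫ x, psi m 0 x ∂ μV m = 1 := by
  simp [psi_zero]

lemma Dker_integral {k : ℕ} (hk : 1 ≤ k) : ∫ x, Dker m k x ∂ μV m = 1 := by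
  unfold Dker
  rw [integral_finset_sum _ fun j _ => integrable_of_continuous m (continuous_psi m j)]
  rw [Finset.sum_eq_single 0]
  · exact psi_integral_one m
  · intro j _ hj
    exact psi_integral_zero m (by omega)
  · intro h
    exact absurd (Finset.mem_range.mpr (by omega)) h

lemma Kker_integral {n : ℕ} (hn : 1 ≤ n) : ∫ x, Kker m n x ∂ μV m = 1 := by
  unfold Kker
  rw [integral_const_mul]
  rw [integral_finset_sum _ fun k _ => integrable_of_continuous m (continuous_Dker m (k+1))]
  rw [Finset.sum_congr rfl fun k _ => Dker_integral m (by omega)]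
  rw [Finset.sum_const, Finset.card_range, nsmul_eq_mul, mul_one]
  rw [inv_mul_cancel₀]
  exact Nat.cast_ne_zero.mpr (by omega)

end Orthogonality
section IntAbs

/-- The `L¹` norm of `f`. -/
def IA (f : G m → ℂ) : ℝ := ∫ x, ‖f x‖ ∂ μV m

lemma IA_nonneg (f : G m → ℂ) : 0 ≤ IA m f :=
  integral_nonneg fun x => norm_nonneg _

lemma integrable_abs {f : G m → ℂ} (hf : Continuous f) :
    Integrable (fun x => ‖f x‖) (μV m) :=
  integrable_of_continuous m (continuous_norm.comp hf)

lemma IA_add_le (f g : G m → ℂ) (hf : Continuous f) (hg : Continuous g) :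
    IA m (fun x => f x + g x) ≤ IA m f + IA m g := by
  rw [IA, IA, IA, ← integral_add (integrable_abs m hf) (integrable_abs m hg)]
  apply integral_mono (integrable_abs m (hf.add hg))
    ((integrable_abs m hf).add (integrable_abs m hg))
  intro x
  exact norm_add_le _ _

lemma IA_mul_le (f g : G m → ℂ) (hf : Continuous f) (hg : Continuous g)
    (B : ℝ) (hB : ∀ x, ‖g x‖ ≤ B) :
    IA m (fun x => g x * f x) ≤ B * IA m f := by
  rw [IA, IA, ← integral_const_mul]
  apply integral_mono (integrable_abs m (hg.mul hf))
    ((integrable_abs m hf).const_mul B)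
  intro x
  show ‖g x * f x‖ ≤ B * ‖f x‖
  rw [norm_mul]
  exact mul_le_mul_of_nonneg_right (hB x) (norm_nonneg _)

lemma IA_const_mul (f : G m → ℂ) (c : ℂ) :
    IA m (fun x => c * f x) = ‖c‖ * IA m f := by
  rw [IA, IA, ← integral_const_mul]
  apply integral_congr_ae
  apply Filter.Eventually.of_forall
  intro x
  show ‖c * f x‖ = ‖c‖ * ‖f x‖
  rw [norm_mul]

lemma IA_D_Mgen (s : ℕ) : IA m (Dker m (Mgen m s)) = 1 := by
  have hdep : Dep m (fun x => (‖Dker m (Mgen m s) x‖ : ℝ)) s :=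
    Dep.comp m (dep_Dker m (le_refl (Mgen m s))) (fun z => (‖z‖ : ℝ))
  rw [IA, integral_eq_avg m s _ hdep]
  have hsum : ∑ a : (∀ i : Fin s, ZMod (mseq m (i : ℕ))),
      (‖Dker m (Mgen m s) (extF m s a)‖ : ℝ) = Mgen m s := by
    rw [Fintype.sum_eq_single 0]
    · have hmem : ∀ i, i < s → extF m s 0 i = 0 := by
        intro i hi
        simp [extF]
      rw [Dker_Mgen, if_pos hmem]
      simp
    · intro b hb
      obtain ⟨i, hi⟩ := Function.ne_iff.mp hb
      have : extF m s b (i : ℕ) ≠ 0 := by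
        rw [extF_apply]
        simpa using hi
      rw [Dker_Mgen, if_neg (fun hall => this (hall (i : ℕ) i.isLt))]
      simp
  rw [hsum]
  rw [smul_eq_mul, inv_mul_cancel₀]
  exact Nat.cast_ne_zero.mpr (Mgen_pos m s).ne'

/-- The single-coordinate bump `tfun τ`. -/
def tfun (s : ℕ) (τ : ZMod (mseq m s)) : G m :=
  fun i => if h : i = s then (by rw [h]; exact τ) else 0

lemma tfun_self (s : ℕ) (τ : ZMod (mseq m s)) : tfun m s τ s = τ := by
  simp [tfun]

lemma tfun_ne (s : ℕ) (τ : ZMod (mseq m s)) {i : ℕ} (hi : i ≠ s) : tfun m s τ i = 0 := by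
  simp [tfun, hi]

lemma sumA (s : ℕ) :
    ∑ w : ZMod (mseq m s),
      ‖∑ p ∈ Finset.range (mseq m s), zet (mseq m s) w.val ^ p‖
      = mseq m s := by
  rw [Fintype.sum_eq_single 0]
  · rw [ZMod.val_zero]
    have h0 : ∑ p ∈ Finset.range (mseq m s), zet (mseq m s) 0 ^ p = ((mseq m s : ℕ) : ℂ) := by
      simp [zet_zero]
    rw [h0, Complex.norm_natCast]
  · intro w hw
    have hv : 0 < w.val := by
      rcases Nat.eq_zero_or_pos w.val with h0 | h0
      · exact absurd ((ZMod.val_eq_zero _).mp h0) hw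
      · exact h0
    rw [geom_zet _ _ hv (ZMod.val_lt _)]
    simp

lemma IA_h_mul (s : ℕ) (f : G m → ℂ) (hdep : Dep m f s) (hf : Continuous f) :
    IA m (fun x => (∑ p ∈ Finset.range (mseq m s), rad m s x ^ p) * f x) = IA m f := by
  set h : G m → ℂ := fun x => ∑ p ∈ Finset.range (mseq m s), rad m s x ^ p with hh
  have hconth : Continuous h := continuous_finset_sum _ fun p _ => (continuous_rad m s).pow _
  have hMne : (mseq m s : ℝ) ≠ 0 := Nat.cast_ne_zero.mpr (by have := mseq_two (m:=m) (k:=s); omega)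
  have hshift : ∀ τ : ZMod (mseq m s), ∀ x : G m,
      h (x + tfun m s τ) = ∑ p ∈ Finset.range (mseq m s), zet (mseq m s) ((x s + τ).val) ^ p := by
    intro τ x
    rw [hh]
    apply Finset.sum_congr rfl
    intro p _
    congr 1
    rw [rad_add, rad_eq_zet, rad_eq_zet, tfun_self]
    have hM : mseq m s ≠ 0 := by have := mseq_two (m:=m) (k:=s); omega
    rw [← zet_add _ _ _ hM, ZMod.val_add, zet_mod _ _ hM]
  have hfshift : ∀ τ : ZMod (mseq m s), ∀ x : G m, f (x + tfun m s τ) = f x := by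
    intro τ x
    apply hdep
    intro i hi
    have : tfun m s τ i = 0 := tfun_ne m s τ (by omega)
    show x i + tfun m s τ i = x i
    rw [this, add_zero]
  have key : ∀ x : G m,
      ∑ τ : ZMod (mseq m s), ‖h (x + tfun m s τ)‖ = mseq m s := by
    intro x
    have h1 : ∀ τ : ZMod (mseq m s), ‖h (x + tfun m s τ)‖
        = ‖∑ p ∈ Finset.range (mseq m s), zet (mseq m s) ((x s + τ).val) ^ p‖ := by
      intro τ; rw [hshift τ x]
    rw [Finset.sum_congr rfl fun τ _ => h1 τ]
    rw [Fintype.sum_equiv (Equiv.addLeft (x s))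
      (fun τ => ‖∑ p ∈ Finset.range (mseq m s), zet (mseq m s) ((x s + τ).val) ^ p‖)
      (fun w => ‖∑ p ∈ Finset.range (mseq m s), zet (mseq m s) (w.val) ^ p‖)
      (fun τ => rfl)]
    exact sumA m s
  -- main computation
  have hmain : (mseq m s : ℝ) * IA m (fun x => h x * f x)
      = (mseq m s : ℝ) * IA m f := by
    have step1 : ∀ τ : ZMod (mseq m s),
        IA m (fun x => h x * f x)
          = ∫ x, ‖h (x + tfun m s τ)‖ * ‖f x‖ ∂ μV m := by
      intro τ
      rw [IA, ← integral_add_right_eq_self (fun x => ‖h x * f x‖) (tfun m s τ)]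
      apply integral_congr_ae
      apply Filter.Eventually.of_forall
      intro x
      show ‖h (x + tfun m s τ) * f (x + tfun m s τ)‖
          = ‖h (x + tfun m s τ)‖ * ‖f x‖
      rw [norm_mul, hfshift τ x]
    have step2 : (mseq m s : ℝ) * IA m (fun x => h x * f x)
        = ∑ τ : ZMod (mseq m s), ∫ x, ‖h (x + tfun m s τ)‖ * ‖f x‖ ∂ μV m := by
      rw [Finset.sum_congr rfl fun τ _ => (step1 τ).symm, Finset.sum_const, Finset.card_univ,
        ZMod.card, nsmul_eq_mul]
    rw [step2, ← integral_finset_sum]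
    · have : ∀ x : G m, ∑ τ : ZMod (mseq m s),
          ‖h (x + tfun m s τ)‖ * ‖f x‖
            = (mseq m s : ℝ) * ‖f x‖ := by
        intro x
        rw [← Finset.sum_mul, key x]
      rw [integral_congr_ae (Filter.Eventually.of_forall this), integral_const_mul]
      rfl
    · intro τ _
      apply integrable_of_continuous m
      apply Continuous.mul
      · exact continuous_norm.comp (hconth.comp (continuous_add_right _))
      · exact continuous_norm.comp hf
  exact mul_left_cancel₀ hMne hmain

end IntAbs
section MainEstimates

/-- `TT n = ∑_{k=1}^n D_k = n K_n`. -/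
def TT (n : ℕ) (x : G m) : ℂ := ∑ k ∈ Finset.range n, Dker m (k + 1) x

lemma continuous_TT (n : ℕ) : Continuous (TT m n) := by
  unfold TT
  exact continuous_finset_sum _ fun k _ => continuous_Dker m (k+1)

lemma dep_TT {n N : ℕ} (h : n ≤ Mgen m N) : Dep m (TT m n) N := by
  intro x y hxy
  unfold TT
  exact Finset.sum_congr rfl fun k hk =>
    dep_Dker m (by have := Finset.mem_range.mp hk; omega) x y hxy

lemma TT_block {q s : ℕ} (hq : q ≤ mseq m s) (x : G m) :
    TT m (q * Mgen m s) x
      = (Mgen m s : ℂ) * ((∑ p ∈ Finset.range q, ∑ l ∈ Finset.range p, rad m s x ^ l)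
            * Dker m (Mgen m s) x)
        + (∑ p ∈ Finset.range q, rad m s x ^ p) * TT m (Mgen m s) x := by
  unfold TT
  rw [sum_range_mul_block (fun k => Dker m (k+1) x) q (Mgen m s)]
  have h1 : ∀ p ∈ Finset.range q, ∑ j ∈ Finset.range (Mgen m s), Dker m (p * Mgen m s + j + 1) x
      = (Mgen m s : ℂ) * Dker m (p * Mgen m s) x
        + rad m s x ^ p * ∑ k ∈ Finset.range (Mgen m s), Dker m (k + 1) x := by
    intro p hp
    rw [Finset.mem_range] at hp
    have h2 : ∀ j ∈ Finset.range (Mgen m s), Dker m (p * Mgen m s + j + 1) x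
        = Dker m (p * Mgen m s) x + rad m s x ^ p * Dker m (j + 1) x := by
      intro j hj
      rw [Finset.mem_range] at hj
      rw [show p * Mgen m s + j + 1 = p * Mgen m s + (j + 1) by ring]
      exact Dker_shift m (by omega) (by omega) x
    rw [Finset.sum_congr rfl h2, Finset.sum_add_distrib, Finset.sum_const,
      Finset.card_range, nsmul_eq_mul, ← Finset.mul_sum]
  rw [Finset.sum_congr rfl h1, Finset.sum_add_distrib]
  congr 1
  · have h3 : ∀ p ∈ Finset.range q, (Mgen m s : ℂ) * Dker m (p * Mgen m s) x
        = (Mgen m s : ℂ) * ((∑ l ∈ Finset.range p, rad m s x ^ l) * Dker m (Mgen m s) x) := by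
      intro p hp
      rw [Finset.mem_range] at hp
      rw [Dker_mul m (by omega) x]
    rw [Finset.sum_congr rfl h3, ← Finset.mul_sum, ← Finset.sum_mul]
  · rw [← Finset.sum_mul]

lemma TT_split {q s r : ℕ} (hq : q < mseq m s) (hr : r ≤ Mgen m s) (x : G m) :
    TT m (q * Mgen m s + r) x
      = TT m (q * Mgen m s) x + (r : ℂ) * Dker m (q * Mgen m s) x
        + rad m s x ^ q * TT m r x := by
  unfold TT
  rw [Finset.sum_range_add]
  have h2 : ∀ j ∈ Finset.range r, Dker m (q * Mgen m s + j + 1) x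
      = Dker m (q * Mgen m s) x + rad m s x ^ q * Dker m (j + 1) x := by
    intro j hj
    rw [Finset.mem_range] at hj
    rw [show q * Mgen m s + j + 1 = q * Mgen m s + (j + 1) by ring]
    exact Dker_shift m hq (by omega) x
  rw [Finset.sum_congr rfl h2, Finset.sum_add_distrib, Finset.sum_const,
    Finset.card_range, nsmul_eq_mul, ← Finset.mul_sum]
  ring

lemma abs_sum_rad_le (s q : ℕ) (x : G m) :
    ‖∑ p ∈ Finset.range q, rad m s x ^ p‖ ≤ (q : ℝ) := by
  calc ‖∑ p ∈ Finset.range q, rad m s x ^ p‖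
      ≤ ∑ p ∈ Finset.range q, ‖rad m s x ^ p‖ :=
        norm_sum_le _ _
    _ = ∑ p ∈ Finset.range q, 1 := by
        apply Finset.sum_congr rfl
        intro p _
        rw [norm_pow, abs_rad, one_pow]
    _ = (q : ℝ) := by rw [Finset.sum_const, Finset.card_range, nsmul_eq_mul, mul_one]

lemma abs_GG_le (s q : ℕ) (x : G m) :
    ‖∑ p ∈ Finset.range q, ∑ l ∈ Finset.range p, rad m s x ^ l‖
      ≤ (q : ℝ) * ((q : ℝ) - 1) := by
  rcases Nat.eq_zero_or_pos q with hq | hq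
  · simp [hq]
  calc ‖∑ p ∈ Finset.range q, ∑ l ∈ Finset.range p, rad m s x ^ l‖
      ≤ ∑ p ∈ Finset.range q, ‖∑ l ∈ Finset.range p, rad m s x ^ l‖ :=
        norm_sum_le _ _
    _ ≤ ∑ p ∈ Finset.range q, ((q : ℝ) - 1) := by
        apply Finset.sum_le_sum
        intro p hp
        rw [Finset.mem_range] at hp
        refine (abs_sum_rad_le m s p x).trans ?_
        have : (p : ℝ) + 1 ≤ (q : ℝ) := by exact_mod_cast hp
        linarith
    _ = (q : ℝ) * ((q : ℝ) - 1) := by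
        rw [Finset.sum_const, Finset.card_range, nsmul_eq_mul]

lemma IA_D_mul_le {p s : ℕ} (hp : p ≤ mseq m s) :
    IA m (Dker m (p * Mgen m s)) ≤ (p : ℝ) := by
  have heq : Dker m (p * Mgen m s)
      = fun x => (∑ l ∈ Finset.range p, rad m s x ^ l) * Dker m (Mgen m s) x :=
    funext fun x => Dker_mul m hp x
  rw [heq]
  have h := IA_mul_le m (Dker m (Mgen m s))
    (fun x => ∑ l ∈ Finset.range p, rad m s x ^ l)
    (continuous_Dker m _)
    (continuous_finset_sum _ fun l _ => (continuous_rad m s).pow _)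
    (p : ℝ) (fun x => abs_sum_rad_le m s p x)
  rw [IA_D_Mgen, mul_one] at h
  exact h

lemma IA_TT_Mgen {R : ℕ} (hR : ∀ k, mseq m k ≤ R) (s : ℕ) :
    IA m (TT m (Mgen m s)) ≤ (R : ℝ) * Mgen m s := by
  have hR2 : 2 ≤ R := le_trans (mseq_two (m := m) (k := 0)) (hR 0)
  induction s with
  | zero =>
    have h1 : TT m (Mgen m 0) = fun _ => (1 : ℂ) := by
      funext x
      show TT m 1 x = 1
      simp [TT, Dker, psi_zero]
    rw [h1]
    have : IA m (fun _ => (1:ℂ)) = 1 := by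
      simp [IA]
    rw [this]
    have : (Mgen m 0 : ℝ) = 1 := by simp [Mgen]
    rw [this, mul_one]
    exact_mod_cast le_trans (by omega) hR2
  | succ s ih =>
    have hMs : Mgen m (s+1) = mseq m s * Mgen m s := Mgen_succ m s
    rw [hMs]
    have hdecomp : TT m (mseq m s * Mgen m s)
        = fun x => ((Mgen m s : ℂ) * ((∑ p ∈ Finset.range (mseq m s), ∑ l ∈ Finset.range p, rad m s x ^ l)
              * Dker m (Mgen m s) x))
          + ((∑ p ∈ Finset.range (mseq m s), rad m s x ^ p) * TT m (Mgen m s) x) :=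
      funext fun x => TT_block m le_rfl x
    rw [hdecomp]
    have hcontG : Continuous (fun x : G m => (∑ p ∈ Finset.range (mseq m s), ∑ l ∈ Finset.range p, rad m s x ^ l) * Dker m (Mgen m s) x) := by
      apply Continuous.mul
      · exact continuous_finset_sum _ fun p _ => continuous_finset_sum _ fun l _ => (continuous_rad m s).pow _
      · exact continuous_Dker m _
    have hcontA : Continuous (fun x : G m => (Mgen m s : ℂ) * ((∑ p ∈ Finset.range (mseq m s), ∑ l ∈ Finset.range p, rad m s x ^ l) * Dker m (Mgen m s) x)) :=
      continuous_const.mul hcontG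
    have hcontB : Continuous (fun x : G m => (∑ p ∈ Finset.range (mseq m s), rad m s x ^ p) * TT m (Mgen m s) x) := by
      apply Continuous.mul
      · exact continuous_finset_sum _ fun p _ => (continuous_rad m s).pow _
      · exact continuous_TT m _
    have hstep := IA_add_le m _ _ hcontA hcontB
    refine le_trans hstep ?_
    -- bound first term
    have hA : IA m (fun x => (Mgen m s : ℂ) * ((∑ p ∈ Finset.range (mseq m s), ∑ l ∈ Finset.range p, rad m s x ^ l) * Dker m (Mgen m s) x))
        ≤ (Mgen m s : ℝ) * ((mseq m s : ℝ) * ((mseq m s : ℝ) - 1)) := by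
      rw [IA_const_mul]
      rw [Complex.norm_natCast]
      apply mul_le_mul_of_nonneg_left _ (by positivity)
      have h := IA_mul_le m (Dker m (Mgen m s))
        (fun x => ∑ p ∈ Finset.range (mseq m s), ∑ l ∈ Finset.range p, rad m s x ^ l)
        (continuous_Dker m _)
        (continuous_finset_sum _ fun p _ => continuous_finset_sum _ fun l _ => (continuous_rad m s).pow _)
        ((mseq m s : ℝ) * ((mseq m s : ℝ) - 1)) (fun x => abs_GG_le m s (mseq m s) x)
      rw [IA_D_Mgen, mul_one] at h
      exact h
    have hB : IA m (fun x => (∑ p ∈ Finset.range (mseq m s), rad m s x ^ p) * TT m (Mgen m s) x)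
        = IA m (TT m (Mgen m s)) :=
      IA_h_mul m s (TT m (Mgen m s)) (dep_TT m le_rfl) (continuous_TT m _)
    rw [hB]
    have hms2 : (2:ℝ) ≤ (mseq m s : ℝ) := by exact_mod_cast mseq_two (m := m) (k := s)
    have hmsR : (mseq m s : ℝ) ≤ (R : ℝ) := by exact_mod_cast hR s
    have hM1 : (1:ℝ) ≤ (Mgen m s : ℝ) := by exact_mod_cast Mgen_pos m s
    have hRr : (2:ℝ) ≤ (R : ℝ) := by exact_mod_cast hR2
    rw [Nat.cast_mul]
    have hm1 : (1:ℝ) ≤ (mseq m s : ℝ) := by linarith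
    have hM0 : (0:ℝ) ≤ (Mgen m s : ℝ) := by linarith
    nlinarith [mul_nonneg (mul_nonneg (sub_nonneg.mpr hm1) (sub_nonneg.mpr hmsR)) hM0, hA, ih]

lemma IA_TT_le {R : ℕ} (hR : ∀ k, mseq m k ≤ R) : ∀ n, IA m (TT m n) ≤ 2 * (R : ℝ) * n := by
  intro n
  induction n using Nat.strong_induction_on with
  | _ n ih =>
    rcases Nat.eq_zero_or_pos n with hn0 | hn0
    · subst hn0
      have : TT m 0 = fun _ => (0:ℂ) := by funext x; simp [TT]
      rw [this]
      simp [IA]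
    obtain ⟨s, hs1, hs2⟩ := exists_level m hn0
    set M := Mgen m s with hM
    set q := n / M with hq
    set r := n % M with hr
    have hMpos : 0 < M := Mgen_pos m s
    have hqM : n = q * M + r := by rw [hq, hr, mul_comm]; exact (Nat.div_add_mod n M).symm
    have hq1 : 1 ≤ q := (Nat.one_le_div_iff hMpos).mpr hs1
    have hq2 : q < mseq m s := by
      rw [hq, Nat.div_lt_iff_lt_mul hMpos]
      rw [Mgen_succ, ← hM] at hs2
      omega
    have hrM : r < M := Nat.mod_lt _ hMpos
    have hrn : r < n := lt_of_lt_of_le hrM hs1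
    -- decompose
    rw [hqM]
    have hdecomp : TT m (q * M + r)
        = fun x => (TT m (q * M) x + (r : ℂ) * Dker m (q * M) x)
            + rad m s x ^ q * TT m r x := by
      funext x
      rw [TT_split m hq2 hrM.le x]
    rw [hdecomp]
    have hcont1 : Continuous (fun x : G m => TT m (q * M) x + (r : ℂ) * Dker m (q * M) x) :=
      (continuous_TT m _).add (continuous_const.mul (continuous_Dker m _))
    have hcont2 : Continuous (fun x : G m => rad m s x ^ q * TT m r x) :=
      ((continuous_rad m s).pow q).mul (continuous_TT m r)
    refine le_trans (IA_add_le m _ _ hcont1 hcont2) ?_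
    have hpart1 : IA m (fun x => TT m (q * M) x + (r : ℂ) * Dker m (q * M) x)
        ≤ IA m (TT m (q * M)) + (r:ℝ) * (q:ℝ) := by
      refine le_trans (IA_add_le m _ _ (continuous_TT m _) (continuous_const.mul (continuous_Dker m _))) ?_
      have h1 : IA m (fun x => (r : ℂ) * Dker m (q * M) x) = (r:ℝ) * IA m (Dker m (q * M)) := by
        rw [IA_const_mul, Complex.norm_natCast]
      rw [h1]
      have h2 : IA m (Dker m (q * M)) ≤ (q:ℝ) := IA_D_mul_le m hq2.le
      have : (r:ℝ) * IA m (Dker m (q * M)) ≤ (r:ℝ) * (q:ℝ) :=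
        mul_le_mul_of_nonneg_left h2 (by positivity)
      linarith
    have hpartTTqM : IA m (TT m (q * M)) ≤ (M:ℝ) * ((q:ℝ) * ((q:ℝ)-1)) + (q:ℝ) * ((R:ℝ) * (M:ℝ)) := by
      have hdecomp2 : TT m (q * M)
          = fun x => ((M : ℂ) * ((∑ p ∈ Finset.range q, ∑ l ∈ Finset.range p, rad m s x ^ l)
                * Dker m M x))
            + ((∑ p ∈ Finset.range q, rad m s x ^ p) * TT m M x) :=
        funext fun x => TT_block m hq2.le x
      rw [hdecomp2]
      have hcA : Continuous (fun x : G m => (M : ℂ) * ((∑ p ∈ Finset.range q, ∑ l ∈ Finset.range p, rad m s x ^ l) * Dker m M x)) := by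
        apply continuous_const.mul
        apply Continuous.mul
        · exact continuous_finset_sum _ fun p _ => continuous_finset_sum _ fun l _ => (continuous_rad m s).pow _
        · exact continuous_Dker m _
      have hcB : Continuous (fun x : G m => (∑ p ∈ Finset.range q, rad m s x ^ p) * TT m M x) := by
        apply Continuous.mul
        · exact continuous_finset_sum _ fun p _ => (continuous_rad m s).pow _
        · exact continuous_TT m _
      refine le_trans (IA_add_le m _ _ hcA hcB) ?_
      have hA : IA m (fun x => (M : ℂ) * ((∑ p ∈ Finset.range q, ∑ l ∈ Finset.range p, rad m s x ^ l) * Dker m M x))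
          ≤ (M:ℝ) * ((q:ℝ) * ((q:ℝ)-1)) := by
        rw [IA_const_mul, Complex.norm_natCast]
        apply mul_le_mul_of_nonneg_left _ (by positivity)
        have h := IA_mul_le m (Dker m M)
          (fun x => ∑ p ∈ Finset.range q, ∑ l ∈ Finset.range p, rad m s x ^ l)
          (continuous_Dker m _)
          (continuous_finset_sum _ fun p _ => continuous_finset_sum _ fun l _ => (continuous_rad m s).pow _)
          ((q:ℝ) * ((q:ℝ)-1)) (fun x => abs_GG_le m s q x)
        rw [hM, IA_D_Mgen, mul_one] at h
        exact h
      have hB : IA m (fun x => (∑ p ∈ Finset.range q, rad m s x ^ p) * TT m M x)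
          ≤ (q:ℝ) * ((R:ℝ) * (M:ℝ)) := by
        have h := IA_mul_le m (TT m M)
          (fun x => ∑ p ∈ Finset.range q, rad m s x ^ p)
          (continuous_TT m _)
          (continuous_finset_sum _ fun p _ => (continuous_rad m s).pow _)
          (q:ℝ) (fun x => abs_sum_rad_le m s q x)
        refine le_trans h ?_
        apply mul_le_mul_of_nonneg_left _ (by positivity)
        exact hM ▸ IA_TT_Mgen m hR s
      linarith
    have hpart2 : IA m (fun x => rad m s x ^ q * TT m r x) ≤ 2 * (R:ℝ) * r := by
      have h := IA_mul_le m (TT m r) (fun x => rad m s x ^ q)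
        (continuous_TT m r) ((continuous_rad m s).pow q)
        1 (fun x => by rw [norm_pow, abs_rad, one_pow])
      rw [one_mul] at h
      exact le_trans h (ih r hrn)
    -- combine
    have hq2R : (q:ℝ) + 1 ≤ (R:ℝ) := by
      have : q + 1 ≤ R := le_trans hq2 (hR s)
      exact_mod_cast this
    have hq1R : (1:ℝ) ≤ (q:ℝ) := by exact_mod_cast hq1
    have hrMR : (r:ℝ) ≤ (M:ℝ) := by exact_mod_cast hrM.le
    have hr0 : (0:ℝ) ≤ (r:ℝ) := by positivity
    have hM1 : (1:ℝ) ≤ (M:ℝ) := by exact_mod_cast hMpos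
    have hR2 : (2:ℝ) ≤ (R : ℝ) := by
      exact_mod_cast le_trans (mseq_two (m := m) (k := 0)) (hR 0)
    have hcast : ((q * M + r : ℕ) : ℝ) = (q:ℝ) * (M:ℝ) + (r:ℝ) := by push_cast; ring
    rw [hcast]
    nlinarith [mul_nonneg (mul_nonneg (sub_nonneg.mpr hq1R) (le_trans zero_le_one hM1)) (sub_nonneg.mpr hq2R),
      mul_nonneg (sub_nonneg.mpr hrMR) (le_trans zero_le_one hq1R),
      mul_nonneg (le_trans zero_le_one hq1R) (le_trans zero_le_one hM1),
      mul_le_mul_of_nonneg_left (sub_nonneg.mpr hq2R) (mul_nonneg (le_trans zero_le_one hq1R) (le_trans zero_le_one hM1))]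

end MainEstimates
/-- `∫ K_n dμ = 1` and `∫ |K_n| dμ ≤ R⁵` for all `n ≥ 1`. -/
theorem fejer_kernel_integrals (m : ℕ → ℕ) (R : ℕ) (hR : ∀ k, mseq m k ≤ R)
    (n : ℕ) (hn : 1 ≤ n) :
    (∫ x, Kker m n x ∂ μV m) = 1 ∧
      (∫ x, ‖Kker m n x‖ ∂ μV m) ≤ (R : ℝ) ^ 5 := by
  constructor
  · exact Kker_integral m hn
  · have h1 : (∫ x, ‖Kker m n x‖ ∂ μV m)
        = IA m (fun x => (n:ℂ)⁻¹ * TT m n x) := rfl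
    rw [h1, IA_const_mul]
    have habs : ‖(n:ℂ)⁻¹‖ = (n:ℝ)⁻¹ := by
      rw [norm_inv, Complex.norm_natCast]
    rw [habs]
    have h2 := IA_TT_le m hR n
    have hn0 : (0:ℝ) < n := by exact_mod_cast hn
    have hR2 : (2:ℝ) ≤ (R:ℝ) := by
      exact_mod_cast le_trans (mseq_two (m := m) (k := 0)) (hR 0)
    have h3 : (n:ℝ)⁻¹ * IA m (TT m n) ≤ (n:ℝ)⁻¹ * (2 * (R:ℝ) * n) :=
      mul_le_mul_of_nonneg_left h2 (by positivity)
    have h4 : (n:ℝ)⁻¹ * (2 * (R:ℝ) * n) = 2 * (R:ℝ) := by field_simp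
    have h5 : 2 * (R:ℝ) ≤ (R:ℝ)^5 := by
      have ha : 2*(R:ℝ) ≤ (R:ℝ)^2 := by nlinarith
      have hb : (R:ℝ)^2 ≤ (R:ℝ)^5 := pow_le_pow_right₀ (by linarith) (by omega)
      linarith
    linarith

end VilPaper
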